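/- Let D ∈ ℝ^{n×n} be diagonal positive definite and 𝒜 ∈ ℝ^{n×(n−1)} the incidence matrix of a connected acyclic graph (so null(𝒜ᵀ) = span(1_n), rank 𝒜 = n−1). Define G := [[D1_n, 𝒜],[1_n, 0]] ∈ ℝ^{2n×n} and G_⊥ := [1_n 1_nᵀ, −(1_nᵀ D 1_n) I_n] ∈ ℝ^{n×2n}. Then G_⊥ has full row rank and null(G_⊥) = range(G). -/

import Mathlib

open Matrix

/-- With `D` diagonal positive definite and `𝒜` the incidence
matrix of a connected acyclic graph, the matrix
`G = [[D1_n, 𝒜],[1_n, 0]]` and `G_⊥ = [1_n1_nᵀ, −(1_nᵀD1_n)I_n]` satisfy: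
`G_⊥` has full row rank (the associated map is surjective) and
`null(G_⊥) = range(G)`.  Vectors in `ℝ^{2n}` are written as pairs `(v, ω)`. -/
theorem stmt12 {n : ℕ}
    (𝒜 : Matrix (Fin n) (Fin (n - 1)) ℝ)
    (h𝒜inj : ∀ x : Fin (n - 1) → ℝ, 𝒜.mulVec x = 0 → x = 0)
    (h𝒜ker : {ω : Fin n → ℝ | 𝒜ᵀ.mulVec ω = 0}
              = {ω : Fin n → ℝ | ∃ c : ℝ, ω = fun _ => c})
    (dD : Fin n → ℝ) (hdD : ∀ i, 0 < dD i)
    (D : Matrix (Fin n) (Fin n) ℝ) (hD : D = Matrix.diagonal dD)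
    (d : ℝ) (hd : d = (fun _ => (1 : ℝ)) ⬝ᵥ D.mulVec (fun _ => 1)) :
    Function.Surjective
      (fun vw : (Fin n → ℝ) × (Fin n → ℝ) =>
        (((fun _ => (1 : ℝ)) ⬝ᵥ vw.1) • (fun _ => (1 : ℝ)) - d • vw.2 : Fin n → ℝ))
    ∧ {vw : (Fin n → ℝ) × (Fin n → ℝ) |
          ((fun _ => (1 : ℝ)) ⬝ᵥ vw.1) • (fun _ => (1 : ℝ)) - d • vw.2 = 0}
      = {vw : (Fin n → ℝ) × (Fin n → ℝ) |
          ∃ (c : ℝ) (x : Fin (n - 1) → ℝ),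
            vw.1 = c • D.mulVec (fun _ => 1) + 𝒜.mulVec x
            ∧ vw.2 = (fun _ => c)} := by
  rcases Nat.eq_zero_or_pos n with hn | hn
  · subst hn
    constructor
    · intro y
      exact ⟨(0, 0), Subsingleton.elim _ _⟩
    · ext vw
      simp only [Set.mem_setOf_eq]
      constructor
      · intro _
        exact ⟨0, 0, Subsingleton.elim _ _, Subsingleton.elim _ _⟩
      · intro _
        exact Subsingleton.elim _ _
  -- main case : n > 0
  have hdval : d = ∑ i, dD i := by
    rw [hd, hD]
    simp [dotProduct, Matrix.mulVec_diagonal]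
  have hdpos : 0 < d := by
    rw [hdval]
    exact Finset.sum_pos (fun i _ => hdD i) (by simp [Finset.univ_nonempty_iff, Fin.pos_iff_nonempty.mp hn])
  have hdne : d ≠ 0 := ne_of_gt hdpos
  -- 𝒜ᵀ 1 = 0
  have hA1 : 𝒜ᵀ.mulVec (fun _ => (1:ℝ)) = 0 := by
    have : (fun _ => (1:ℝ)) ∈ {ω : Fin n → ℝ | ∃ c : ℝ, ω = fun _ => c} := ⟨1, rfl⟩
    rw [← h𝒜ker] at this
    exact this
  have hdot : ∀ x : Fin (n-1) → ℝ, (fun _ => (1:ℝ)) ⬝ᵥ 𝒜.mulVec x = 0 := by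
    intro x
    rw [Matrix.dotProduct_mulVec]
    have : 𝒜.vecMul (fun _ => (1:ℝ)) = 𝒜ᵀ.mulVec (fun _ => (1:ℝ)) := by
      rw [Matrix.mulVec_transpose]
    rw [this, hA1, zero_dotProduct]
  -- the linear functional u ↦ 1 ⬝ᵥ u
  set f : (Fin n → ℝ) →ₗ[ℝ] ℝ :=
    { toFun := fun u => (fun _ => (1:ℝ)) ⬝ᵥ u
      map_add' := fun a b => dotProduct_add _ a b
      map_smul' := fun r a => by simp [dotProduct_smul] } with hf
  have hfapp : ∀ u, f u = (fun _ => (1:ℝ)) ⬝ᵥ u := fun u => rfl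
  have hfsurj : Function.Surjective f := by
    apply LinearMap.surjective_of_ne_zero
    intro h0
    have i0 : Fin n := ⟨0, hn⟩
    have : f (fun _ => (1:ℝ)) = 0 := by rw [h0]; rfl
    rw [hfapp] at this
    simp [dotProduct] at this
    exact absurd this (by positivity)
  -- T = mulVec by 𝒜
  set T : (Fin (n-1) → ℝ) →ₗ[ℝ] (Fin n → ℝ) := Matrix.mulVecLin 𝒜 with hT
  have hTinj : Function.Injective T := by
    rw [← LinearMap.ker_eq_bot]
    apply (Submodule.eq_bot_iff _).mpr
    intro x hx
    exact h𝒜inj x hx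
  have hle : LinearMap.range T ≤ LinearMap.ker f := by
    rintro u ⟨x, rfl⟩
    exact hdot x
  have hkerrank : Module.finrank ℝ (LinearMap.ker f) = n - 1 := by
    have h1 := LinearMap.finrank_range_add_finrank_ker f
    rw [LinearMap.range_eq_top.mpr hfsurj] at h1
    simp [Module.finrank_fin_fun] at h1
    omega
  have hrangerank : Module.finrank ℝ (LinearMap.range T) = n - 1 := by
    rw [LinearMap.finrank_range_of_inj hTinj, Module.finrank_fin_fun]
  have hkey : LinearMap.range T = LinearMap.ker f :=
    Submodule.eq_of_le_of_finrank_eq hle (by rw [hrangerank, hkerrank])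
  constructor
  · -- surjectivity
    intro y
    refine ⟨(0, (-d⁻¹) • y), ?_⟩
    simp only
    have h0 : (fun _ => (1:ℝ)) ⬝ᵥ (0 : Fin n → ℝ) = 0 := by simp [dotProduct]
    rw [h0, zero_smul, zero_sub, smul_smul]
    rw [show d * -d⁻¹ = -1 by field_simp]
    funext i
    simp
  · ext ⟨v, w⟩
    simp only [Set.mem_setOf_eq]
    constructor
    · intro h
      set s : ℝ := (fun _ => (1:ℝ)) ⬝ᵥ v with hs
      have hw : w = fun _ => s / d := by
        funext i
        have := congrFun h i
        simp [Pi.sub_apply, Pi.smul_apply, smul_eq_mul] at this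
        field_simp
        linarith [this]
      have hu : v - (s / d) • D.mulVec (fun _ => 1) ∈ LinearMap.ker f := by
        rw [LinearMap.mem_ker, map_sub, LinearMap.map_smul, hfapp, hfapp, ← hs, ← hd]
        simp [smul_eq_mul]
        field_simp
        ring
      rw [← hkey] at hu
      obtain ⟨x, hx⟩ := hu
      refine ⟨s / d, x, ?_, hw⟩
      have : 𝒜.mulVec x = v - (s / d) • D.mulVec (fun _ => 1) := hx
      rw [this]
      abel
    · rintro ⟨c, x, hv, hw⟩
      rw [hv, hw]
      have : (fun _ => (1:ℝ)) ⬝ᵥ (c • D.mulVec (fun _ => 1) + 𝒜.mulVec x) = c * d := by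
        rw [dotProduct_add, dotProduct_smul, hdot x, ← hd]
        simp [smul_eq_mul]
      rw [this]
      funext i
      simp [Pi.sub_apply, Pi.smul_apply, smul_eq_mul]
      ring
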